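/- There exist absolute positive constants c₀, C₀ such that: whenever u₁,…,u_m ∈ ℂⁿ satisfy ‖u_i‖² = n/m for all i and ∑_{i=1}^m |⟨w,u_i⟩|² = ‖w‖² for all w ∈ ℂⁿ, there is a subset J ⊂ {1,…,m} with c₀·(n/m)·‖w‖² ≤ ∑_{i∈J} |⟨w,u_i⟩|² ≤ C₀·(n/m)·‖w‖² for all w ∈ ℂⁿ. (The Marcus–Spielman–Srivastava partition theorem may be assumed as a hypothesis.) -/

import Mathlib

open Finset in
noncomputable def Dop {n : ℕ} (e : OrthonormalBasis (Fin n) ℂ (EuclideanSpace ℂ (Fin n)))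
    (d : Fin n → ℝ) (x : EuclideanSpace ℂ (Fin n)) : EuclideanSpace ℂ (Fin n) :=
  ∑ j, ((d j : ℂ) * (inner ℂ (e j) x : ℂ)) • e j

variable {n : ℕ} (e : OrthonormalBasis (Fin n) ℂ (EuclideanSpace ℂ (Fin n)))
  (d d' : Fin n → ℝ) (x y : EuclideanSpace ℂ (Fin n))

lemma Dop_coeff (j : Fin n) :
    (inner ℂ (e j) (Dop e d x) : ℂ) = (d j : ℂ) * (inner ℂ (e j) x : ℂ) := by
  simp only [Dop, inner_sum, inner_smul_right]
  rw [Finset.sum_eq_single j]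
  · simp [e.orthonormal.1 j, inner_self_eq_norm_sq_to_K]
  · intro k _ hk
    rw [e.orthonormal.2 (Ne.symm hk)]; ring
  · simp

lemma Dop_adjoint :
    (inner ℂ (Dop e d x) y : ℂ) = (inner ℂ x (Dop e d y) : ℂ) := by
  rw [← e.sum_inner_mul_inner (Dop e d x) y, ← e.sum_inner_mul_inner x (Dop e d y)]
  refine Finset.sum_congr rfl fun j _ => ?_
  have h1 : (inner ℂ (Dop e d x) (e j) : ℂ) = (d j : ℂ) * (inner ℂ x (e j) : ℂ) := by
    rw [← inner_conj_symm, Dop_coeff, map_mul, Complex.conj_ofReal, inner_conj_symm]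
  rw [h1, Dop_coeff]; ring

lemma Dop_Dop : Dop e d (Dop e d' x) = Dop e (fun j => d j * d' j) x := by
  simp only [Dop]
  refine Finset.sum_congr rfl fun j _ => ?_
  rw [show (inner ℂ (e j) (∑ k, ((d' k : ℂ) * (inner ℂ (e k) x : ℂ)) • e k) : ℂ)
      = (d' j : ℂ) * (inner ℂ (e j) x : ℂ) from Dop_coeff e d' x j]
  push_cast; ring_nf

lemma Dop_one : Dop e (fun _ => 1) x = x := by
  simp only [Dop, Complex.ofReal_one, one_mul]
  exact e.sum_repr' x

lemma conj_mul_self_eq (z : ℂ) : (starRingEnd ℂ) z * z = ((‖z‖ ^ 2 : ℝ) : ℂ) := by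
  rw [mul_comm, Complex.mul_conj, Complex.normSq_eq_norm_sq]

lemma mul_conj_self_eq (z : ℂ) :
    z * (starRingEnd ℂ) z = ((‖(starRingEnd ℂ) z‖ ^ 2 : ℝ) : ℂ) := by
  simp [Complex.mul_conj, Complex.normSq_eq_norm_sq, Complex.norm_conj]

lemma norm_sq_eq_sum_coeff : ‖x‖ ^ 2 = ∑ j, ‖(inner ℂ (e j) x : ℂ)‖ ^ 2 := by
  have h := e.sum_inner_mul_inner x x
  rw [inner_self_eq_norm_sq_to_K] at h
  have hterm : ∀ j : Fin n, (inner ℂ x (e j) : ℂ) * (inner ℂ (e j) x : ℂ)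
      = ((‖(inner ℂ (e j) x : ℂ)‖ ^ 2 : ℝ) : ℂ) := by
    intro j
    rw [← inner_conj_symm (e j) x]
    exact mul_conj_self_eq _
  rw [Finset.sum_congr rfl (fun j _ => hterm j)] at h
  rw [← RCLike.ofReal_pow, ← Complex.ofReal_sum] at h
  exact (RCLike.ofReal_inj.mp h).symm

section FrameOp
variable {n m : ℕ} (u : Fin m → EuclideanSpace ℂ (Fin n)) (T : Finset (Fin m))

noncomputable def frameOp : EuclideanSpace ℂ (Fin n) →ₗ[ℂ] EuclideanSpace ℂ (Fin n) :=
  ∑ i ∈ T, ((innerSL ℂ (u i)).smulRight (u i)).toLinearMap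

lemma frameOp_apply (w : EuclideanSpace ℂ (Fin n)) :
    frameOp u T w = ∑ i ∈ T, (inner ℂ (u i) w : ℂ) • u i := by
  simp [frameOp, LinearMap.sum_apply]

lemma frameOp_isSymmetric : (frameOp u T).IsSymmetric := by
  intro x y
  simp only [frameOp_apply, sum_inner, inner_sum, inner_smul_left, inner_smul_right]
  refine Finset.sum_congr rfl fun i _ => ?_
  rw [inner_conj_symm]
  ring

lemma frameOp_qform (x : EuclideanSpace ℂ (Fin n)) :
    (inner ℂ x (frameOp u T x) : ℂ) = ((∑ i ∈ T, ‖(inner ℂ x (u i) : ℂ)‖ ^ 2 : ℝ) : ℂ) := by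
  rw [frameOp_apply, inner_sum, Complex.ofReal_sum]
  refine Finset.sum_congr rfl fun i _ => ?_
  rw [inner_smul_right, ← inner_conj_symm x (u i)]
  exact mul_conj_self_eq _

end FrameOp

lemma sum_T_eq {m : ℕ} (T : Finset (Fin m)) (f : Fin m → ℝ) :
    ∑ i ∈ T, f i = ∑ i' : Fin T.card, f (T.orderEmbOfFin rfl i') := by
  have hmap : Finset.univ.map (T.orderEmbOfFin rfl).toEmbedding = T := by
    ext a
    simp only [Finset.mem_map, Finset.mem_univ, true_and]
    constructor
    · rintro ⟨i, rfl⟩; exact T.orderEmbOfFin_mem rfl i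
    · intro ha
      have : a ∈ Set.range (T.orderEmbOfFin rfl) := by
        rw [Finset.range_orderEmbOfFin]; exact ha
      obtain ⟨i, hi⟩ := this
      exact ⟨i, hi⟩
  conv_lhs => rw [← hmap]
  rw [Finset.sum_map]
  rfl

set_option maxHeartbeats 2000000 in
lemma step_lemma
    (hMSS : ∀ (n m : ℕ) (ε : ℝ), 0 < ε → ∀ u : Fin m → EuclideanSpace ℂ (Fin n),
      (∀ i, ‖u i‖ ^ 2 ≤ ε) →
      (∀ w : EuclideanSpace ℂ (Fin n), ∑ i, ‖(inner ℂ w (u i) : ℂ)‖ ^ 2 = ‖w‖ ^ 2) →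
      ∃ S : Finset (Fin m), ∀ w : EuclideanSpace ℂ (Fin n),
        (∑ i ∈ S, ‖(inner ℂ w (u i) : ℂ)‖ ^ 2 ≤ (1 + Real.sqrt (2 * ε)) ^ 2 / 2 * ‖w‖ ^ 2) ∧
        (∑ i ∈ Sᶜ, ‖(inner ℂ w (u i) : ℂ)‖ ^ 2 ≤ (1 + Real.sqrt (2 * ε)) ^ 2 / 2 * ‖w‖ ^ 2))
    {n m : ℕ} (u : Fin m → EuclideanSpace ℂ (Fin n)) (T : Finset (Fin m))
    (ε a b : ℝ) (hε : 0 < ε) (ha : 0 < a)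
    (hnorm : ∀ i, ‖u i‖ ^ 2 ≤ ε)
    (hlow : ∀ w : EuclideanSpace ℂ (Fin n),
      a * ‖w‖ ^ 2 ≤ ∑ i ∈ T, ‖(inner ℂ w (u i) : ℂ)‖ ^ 2)
    (hup : ∀ w : EuclideanSpace ℂ (Fin n),
      ∑ i ∈ T, ‖(inner ℂ w (u i) : ℂ)‖ ^ 2 ≤ b * ‖w‖ ^ 2)
    (hβ : (1 + Real.sqrt (2 * (ε / a))) ^ 2 / 2 ≤ 1) :
    ∃ S : Finset (Fin m), ∀ w : EuclideanSpace ℂ (Fin n),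
      (1 - (1 + Real.sqrt (2 * (ε / a))) ^ 2 / 2) * (a * ‖w‖ ^ 2)
          ≤ ∑ i ∈ S, ‖(inner ℂ w (u i) : ℂ)‖ ^ 2 ∧
      ∑ i ∈ S, ‖(inner ℂ w (u i) : ℂ)‖ ^ 2
          ≤ (1 + Real.sqrt (2 * (ε / a))) ^ 2 / 2 * (b * ‖w‖ ^ 2) := by
  classical
  set β := (1 + Real.sqrt (2 * (ε / a))) ^ 2 / 2 with hβdef
  have hβ0 : 0 ≤ β := by positivity
  have hA : (frameOp u T).IsSymmetric := frameOp_isSymmetric u T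
  have hn' : Module.finrank ℂ (EuclideanSpace ℂ (Fin n)) = n := finrank_euclideanSpace_fin
  set e := hA.eigenvectorBasis hn' with hedef
  set lam := hA.eigenvalues hn' with hlamdef
  have heig : ∀ j, frameOp u T (e j) = (lam j : ℂ) • e j := hA.apply_eigenvectorBasis hn'
  -- quadratic form in eigencoordinates
  have hQ : ∀ x : EuclideanSpace ℂ (Fin n),
      ∑ i ∈ T, ‖(inner ℂ x (u i) : ℂ)‖ ^ 2 = ∑ j, lam j * ‖(inner ℂ (e j) x : ℂ)‖ ^ 2 := by
    intro x
    have h1 := frameOp_qform u T x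
    have h2 : frameOp u T x = ∑ j, (inner ℂ (e j) x : ℂ) • ((lam j : ℂ) • e j) := by
      conv_lhs => rw [← e.sum_repr' x]
      rw [map_sum]
      exact Finset.sum_congr rfl fun j _ => by rw [map_smul, heig]
    have h3 : (inner ℂ x (frameOp u T x) : ℂ)
        = ((∑ j, lam j * ‖(inner ℂ (e j) x : ℂ)‖ ^ 2 : ℝ) : ℂ) := by
      rw [h2, inner_sum, Complex.ofReal_sum]
      refine Finset.sum_congr rfl fun j _ => ?_
      rw [inner_smul_right, inner_smul_right, ← inner_conj_symm (e j) x,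
        Complex.ofReal_mul, RCLike.norm_conj, ← conj_mul_self_eq (inner ℂ x (e j))]
      ring
    exact Complex.ofReal_inj.mp (h1.symm.trans h3)
  have hlam_ge : ∀ j, a ≤ lam j := by
    intro j
    have h1 := hlow (e j)
    rw [hQ (e j)] at h1
    have h2 : ∑ j', lam j' * ‖(inner ℂ (e j') (e j) : ℂ)‖ ^ 2 = lam j := by
      rw [Finset.sum_eq_single j]
      · simp [e.orthonormal.1 j, inner_self_eq_norm_sq_to_K]
      · intro k _ hk
        rw [e.orthonormal.2 hk]
        simp
      · simp
    rw [h2] at h1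
    simpa [e.orthonormal.1 j] using h1
  have hlam_pos : ∀ j, 0 < lam j := fun j => lt_of_lt_of_le ha (hlam_ge j)
  set s : Fin n → ℝ := fun j => (Real.sqrt (lam j))⁻¹ with hsdef
  set s' : Fin n → ℝ := fun j => Real.sqrt (lam j) with hs'def
  have hsqrt_pos : ∀ j, 0 < Real.sqrt (lam j) := fun j => Real.sqrt_pos.mpr (hlam_pos j)
  have hss' : ∀ j, s j * s' j = 1 := fun j => inv_mul_cancel₀ (hsqrt_pos j).ne'
  have hs2 : ∀ j, (s j) ^ 2 = (lam j)⁻¹ := by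
    intro j
    have h : s j = Real.sqrt (lam j)⁻¹ := by
      show (Real.sqrt (lam j))⁻¹ = _
      rw [Real.sqrt_inv]
    rw [h]
    exact Real.sq_sqrt (inv_nonneg.mpr (hlam_pos j).le)
  have hs'2 : ∀ j, (s' j) ^ 2 = lam j := fun j => Real.sq_sqrt (hlam_pos j).le
  have hcoeff : ∀ (d : Fin n → ℝ) (x : EuclideanSpace ℂ (Fin n)) (j : Fin n),
      ‖(inner ℂ (e j) (Dop e d x) : ℂ)‖ ^ 2 = (d j) ^ 2 * ‖(inner ℂ (e j) x : ℂ)‖ ^ 2 := by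
    intro d x j
    rw [Dop_coeff e d x j, norm_mul, mul_pow, Complex.norm_real, Real.norm_eq_abs, sq_abs]
  set g : Fin T.card → Fin m := fun i' => T.orderEmbOfFin rfl i' with hgdef
  set v : Fin T.card → EuclideanSpace ℂ (Fin n) := fun i' => Dop e s (u (g i')) with hvdef
  have hv_norm : ∀ i', ‖v i'‖ ^ 2 ≤ ε / a := by
    intro i'
    show ‖Dop e s (u (g i'))‖ ^ 2 ≤ ε / a
    rw [norm_sq_eq_sum_coeff e (Dop e s (u (g i')))]
    have hle : ∀ j, (s j) ^ 2 * ‖(inner ℂ (e j) (u (g i')) : ℂ)‖ ^ 2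
        ≤ a⁻¹ * ‖(inner ℂ (e j) (u (g i')) : ℂ)‖ ^ 2 := by
      intro j
      apply mul_le_mul_of_nonneg_right _ (by positivity)
      rw [hs2 j]
      exact inv_anti₀ ha (hlam_ge j)
    calc ∑ j, ‖(inner ℂ (e j) (Dop e s (u (g i'))) : ℂ)‖ ^ 2
        = ∑ j, (s j) ^ 2 * ‖(inner ℂ (e j) (u (g i')) : ℂ)‖ ^ 2 :=
          Finset.sum_congr rfl fun j _ => hcoeff s _ j
      _ ≤ ∑ j, a⁻¹ * ‖(inner ℂ (e j) (u (g i')) : ℂ)‖ ^ 2 :=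
          Finset.sum_le_sum fun j _ => hle j
      _ = a⁻¹ * ‖u (g i')‖ ^ 2 := by
          rw [← Finset.mul_sum, ← norm_sq_eq_sum_coeff e (u (g i'))]
      _ ≤ a⁻¹ * ε := by
          apply mul_le_mul_of_nonneg_left (hnorm _) (by positivity)
      _ = ε / a := by rw [div_eq_inv_mul]
  have hv_par : ∀ x : EuclideanSpace ℂ (Fin n), ∑ i', ‖(inner ℂ x (v i') : ℂ)‖ ^ 2 = ‖x‖ ^ 2 := by
    intro x
    have h1 : ∀ i', (inner ℂ x (v i') : ℂ) = inner ℂ (Dop e s x) (u (g i')) := by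
      intro i'
      exact (Dop_adjoint e s x (u (g i'))).symm
    calc ∑ i', ‖(inner ℂ x (v i') : ℂ)‖ ^ 2
        = ∑ i', ‖(inner ℂ (Dop e s x) (u (g i')) : ℂ)‖ ^ 2 :=
          Finset.sum_congr rfl fun i' _ => by rw [h1]
      _ = ∑ i ∈ T, ‖(inner ℂ (Dop e s x) (u i) : ℂ)‖ ^ 2 := by
          simp only [hgdef]
          exact (sum_T_eq T fun i => ‖(inner ℂ (Dop e s x) (u i) : ℂ)‖ ^ 2).symm
      _ = ∑ j, lam j * ‖(inner ℂ (e j) (Dop e s x) : ℂ)‖ ^ 2 := hQ _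
      _ = ∑ j, ‖(inner ℂ (e j) x : ℂ)‖ ^ 2 := by
          refine Finset.sum_congr rfl fun j _ => ?_
          rw [hcoeff s x j, hs2 j, ← mul_assoc, mul_inv_cancel₀ (hlam_pos j).ne', one_mul]
      _ = ‖x‖ ^ 2 := (norm_sq_eq_sum_coeff e x).symm
  obtain ⟨S', hS'⟩ := hMSS n T.card (ε / a) (div_pos hε ha) v hv_norm hv_par
  refine ⟨S'.map (T.orderEmbOfFin rfl).toEmbedding, ?_⟩
  intro w
  set w' : EuclideanSpace ℂ (Fin n) := Dop e s' w with hw'def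
  have hw'u : ∀ i', (inner ℂ w' (v i') : ℂ) = inner ℂ w (u (g i')) := by
    intro i'
    show (inner ℂ (Dop e s' w) (Dop e s (u (g i'))) : ℂ) = _
    calc (inner ℂ (Dop e s' w) (Dop e s (u (g i'))) : ℂ)
        = inner ℂ (Dop e s (Dop e s' w)) (u (g i')) := (Dop_adjoint e s _ _).symm
      _ = inner ℂ (Dop e (fun j => s j * s' j) w) (u (g i')) := by rw [Dop_Dop]
      _ = inner ℂ w (u (g i')) := by
          rw [show (fun j => s j * s' j) = fun _ : Fin n => (1 : ℝ) from
            funext fun j => hss' j, Dop_one]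
  have hw'_norm : ‖w'‖ ^ 2 = ∑ i ∈ T, ‖(inner ℂ w (u i) : ℂ)‖ ^ 2 := by
    rw [show w' = Dop e s' w from rfl, norm_sq_eq_sum_coeff e (Dop e s' w), hQ w]
    refine Finset.sum_congr rfl fun j _ => ?_
    rw [hcoeff s' w j, hs'2 j]
  have hsum_map : ∑ i ∈ S'.map (T.orderEmbOfFin rfl).toEmbedding,
      ‖(inner ℂ w (u i) : ℂ)‖ ^ 2 = ∑ i' ∈ S', ‖(inner ℂ w' (v i') : ℂ)‖ ^ 2 := by
    rw [Finset.sum_map]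
    exact Finset.sum_congr rfl fun i' _ => by rw [hw'u i']; rfl
  obtain ⟨hSb, hScb⟩ := hS' w'
  rw [← hβdef] at hSb hScb
  have htot : ∑ i' ∈ S', ‖(inner ℂ w' (v i') : ℂ)‖ ^ 2
      + ∑ i' ∈ S'ᶜ, ‖(inner ℂ w' (v i') : ℂ)‖ ^ 2 = ‖w'‖ ^ 2 := by
    rw [Finset.sum_add_sum_compl]
    exact hv_par w'
  have hQw_low := hlow w
  have hQw_up := hup w
  constructor
  · rw [hsum_map]
    have h1 : (1 - β) * ‖w'‖ ^ 2 ≤ ∑ i' ∈ S', ‖(inner ℂ w' (v i') : ℂ)‖ ^ 2 := by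
      nlinarith [hScb]
    have h2 : (1 - β) * (a * ‖w‖ ^ 2) ≤ (1 - β) * ‖w'‖ ^ 2 := by
      apply mul_le_mul_of_nonneg_left _ (by linarith)
      rw [hw'_norm]
      exact hQw_low
    linarith
  · rw [hsum_map]
    have h2 : β * ‖w'‖ ^ 2 ≤ β * (b * ‖w‖ ^ 2) := by
      apply mul_le_mul_of_nonneg_left _ hβ0
      rw [hw'_norm]
      exact hQw_up
    linarith [hSb]

set_option maxHeartbeats 1000000 in
lemma numeric_ineq (t s r2 : ℝ) (ht0 : 0 ≤ t) (htb : t ^ 2 ≤ 1 / 20000) (hs0 : 0 ≤ s)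
    (hsa : s ^ 2 * (1 - 30 * t) = 2 * t ^ 2) (h141 : 1.41 ≤ r2) (h150 : r2 ≤ 1.5) :
    (1 + s) ^ 2 / 2 ≤ 1 ∧
      1 - 30 * (r2 * t) ≤ 2 * ((1 - (1 + s) ^ 2 / 2) * (1 - 30 * t)) ∧
      2 * ((1 + s) ^ 2 / 2 * (1 + 30 * t)) ≤ 1 + 30 * (r2 * t) := by
  have ht100 : t ≤ 1 / 100 := by nlinarith
  have h07 : (7 : ℝ) / 10 ≤ 1 - 30 * t := by linarith
  have hs2b : s ^ 2 ≤ 29 / 10 * t ^ 2 := by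
    nlinarith [mul_nonneg (sq_nonneg s) (show (0:ℝ) ≤ 3 / 10 - 30 * t by linarith)]
  have ht2t : t ^ 2 ≤ 1 / 100 * t := by nlinarith
  have hs2t : s ^ 2 ≤ 3 / 100 * t := by nlinarith
  have hs17 : s ≤ 7 / 4 * t := by
    have h1 : s ^ 2 ≤ (7 / 4 * t) ^ 2 := by nlinarith
    calc s = Real.sqrt (s ^ 2) := (Real.sqrt_sq hs0).symm
      _ ≤ Real.sqrt ((7 / 4 * t) ^ 2) := Real.sqrt_le_sqrt h1
      _ = 7 / 4 * t := Real.sqrt_sq (by nlinarith)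
  have hts : t * s ≤ 7 / 400 * t := by nlinarith
  have hts2 : t * s ^ 2 ≤ 3 / 10000 * t := by nlinarith
  have hr2l : 141 / 100 * t ≤ r2 * t := mul_le_mul_of_nonneg_right (by linarith) ht0
  have hr2u : r2 * t ≤ 3 / 2 * t := mul_le_mul_of_nonneg_right (by linarith) ht0
  refine ⟨by nlinarith, by nlinarith, by nlinarith⟩

set_option maxHeartbeats 1000000 in
lemma iter_lemma
    (hMSS : ∀ (n m : ℕ) (ε : ℝ), 0 < ε → ∀ u : Fin m → EuclideanSpace ℂ (Fin n),
      (∀ i, ‖u i‖ ^ 2 ≤ ε) →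
      (∀ w : EuclideanSpace ℂ (Fin n), ∑ i, ‖(inner ℂ w (u i) : ℂ)‖ ^ 2 = ‖w‖ ^ 2) →
      ∃ S : Finset (Fin m), ∀ w : EuclideanSpace ℂ (Fin n),
        (∑ i ∈ S, ‖(inner ℂ w (u i) : ℂ)‖ ^ 2 ≤ (1 + Real.sqrt (2 * ε)) ^ 2 / 2 * ‖w‖ ^ 2) ∧
        (∑ i ∈ Sᶜ, ‖(inner ℂ w (u i) : ℂ)‖ ^ 2 ≤ (1 + Real.sqrt (2 * ε)) ^ 2 / 2 * ‖w‖ ^ 2)) :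
    ∀ (k n m : ℕ) (u : Fin m → EuclideanSpace ℂ (Fin n)) (ε : ℝ), 0 < ε →
      (2 : ℝ) ^ k * ε ≤ 1 / 10000 →
      (∀ i, ‖u i‖ ^ 2 ≤ ε) →
      (∀ w : EuclideanSpace ℂ (Fin n), ∑ i, ‖(inner ℂ w (u i) : ℂ)‖ ^ 2 = ‖w‖ ^ 2) →
      ∃ J : Finset (Fin m), ∀ w : EuclideanSpace ℂ (Fin n),
        (1 - 30 * Real.sqrt ((2 : ℝ) ^ k * ε)) * ‖w‖ ^ 2
            ≤ (2 : ℝ) ^ k * ∑ i ∈ J, ‖(inner ℂ w (u i) : ℂ)‖ ^ 2 ∧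
        (2 : ℝ) ^ k * ∑ i ∈ J, ‖(inner ℂ w (u i) : ℂ)‖ ^ 2
            ≤ (1 + 30 * Real.sqrt ((2 : ℝ) ^ k * ε)) * ‖w‖ ^ 2 := by
  intro k
  induction k with
  | zero =>
    intro n m u ε hε hεδ hnorm hpar
    refine ⟨Finset.univ, fun w => ?_⟩
    simp only [pow_zero, one_mul, hpar w]
    have h0 : 0 ≤ Real.sqrt ε := Real.sqrt_nonneg ε
    have hw0 : (0 : ℝ) ≤ ‖w‖ ^ 2 := by positivity
    constructor
    · nlinarith
    · nlinarith
  | succ k IH =>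
    intro n m u ε hε hεδ hnorm hpar
    have hp : (0 : ℝ) < (2 : ℝ) ^ k := by positivity
    have h2k1 : ((2 : ℝ) ^ (k + 1)) = 2 * (2 : ℝ) ^ k := by ring
    have hεδ' : (2 : ℝ) ^ k * ε ≤ 1 / 10000 := by nlinarith
    have hεδ2 : (2 : ℝ) ^ k * ε ≤ 1 / 20000 := by nlinarith
    obtain ⟨J, hJ⟩ := IH n m u ε hε hεδ' hnorm hpar
    set t := Real.sqrt ((2 : ℝ) ^ k * ε) with htdef
    have ht0 : 0 ≤ t := Real.sqrt_nonneg _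
    have ht2 : t ^ 2 = (2 : ℝ) ^ k * ε := Real.sq_sqrt (by positivity)
    have htb : t ^ 2 ≤ 1 / 20000 := by rw [ht2]; exact hεδ2
    have ht100 : t ≤ 1 / 100 := by nlinarith
    have h30t : 30 * t ≤ 3 / 10 := by linarith
    set a : ℝ := (1 - 30 * t) / (2 : ℝ) ^ k with hadef
    set b : ℝ := (1 + 30 * t) / (2 : ℝ) ^ k with hbdef
    have ha : 0 < a := by
      rw [hadef]
      apply div_pos (by linarith) hp
    have hpa : (2 : ℝ) ^ k * a = 1 - 30 * t := by
      rw [hadef]; field_simp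
    have hpb : (2 : ℝ) ^ k * b = 1 + 30 * t := by
      rw [hbdef]; field_simp
    have hlow : ∀ w : EuclideanSpace ℂ (Fin n),
        a * ‖w‖ ^ 2 ≤ ∑ i ∈ J, ‖(inner ℂ w (u i) : ℂ)‖ ^ 2 := by
      intro w
      have h1 := (hJ w).1
      rw [div_mul_eq_mul_div, div_le_iff₀ hp]
      nlinarith
    have hup : ∀ w : EuclideanSpace ℂ (Fin n),
        ∑ i ∈ J, ‖(inner ℂ w (u i) : ℂ)‖ ^ 2 ≤ b * ‖w‖ ^ 2 := by
      intro w
      have h2 := (hJ w).2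
      rw [hbdef, div_mul_eq_mul_div, le_div_iff₀ hp]
      nlinarith
    have hane : a ≠ 0 := ne_of_gt ha
    have hs0 : 0 ≤ Real.sqrt (2 * (ε / a)) := Real.sqrt_nonneg _
    have hs2 : Real.sqrt (2 * (ε / a)) ^ 2 = 2 * (ε / a) := Real.sq_sqrt (by positivity)
    have hsa : Real.sqrt (2 * (ε / a)) ^ 2 * (1 - 30 * t) = 2 * t ^ 2 := by
      rw [hs2, ← hpa, ht2]
      field_simp
    have h141 : (1.41 : ℝ) ≤ Real.sqrt 2 := by
      nlinarith [Real.sq_sqrt (show (0:ℝ) ≤ 2 by norm_num), Real.sqrt_nonneg 2]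
    have h150 : Real.sqrt 2 ≤ (1.5 : ℝ) := by
      nlinarith [Real.sq_sqrt (show (0:ℝ) ≤ 2 by norm_num), Real.sqrt_nonneg 2]
    obtain ⟨hβ1, key1, key2⟩ := numeric_ineq t (Real.sqrt (2 * (ε / a))) (Real.sqrt 2)
      ht0 htb hs0 hsa h141 h150
    obtain ⟨S, hS⟩ := step_lemma hMSS u J ε a b hε ha hnorm hlow hup hβ1
    refine ⟨S, fun w => ?_⟩
    obtain ⟨h1, h2⟩ := hS w
    have hw0 : (0 : ℝ) ≤ ‖w‖ ^ 2 := by positivity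
    have hr2 : Real.sqrt ((2 : ℝ) ^ (k + 1) * ε) = Real.sqrt 2 * t := by
      rw [htdef, ← Real.sqrt_mul (by norm_num : (0:ℝ) ≤ 2)]
      congr 1
      ring
    rw [hr2, h2k1]
    constructor
    · have key := key1
      have hc : (1 - (1 + Real.sqrt (2 * (ε / a))) ^ 2 / 2) * (a * ‖w‖ ^ 2) ≤ ∑ i ∈ S, ‖(inner ℂ w (u i) : ℂ)‖ ^ 2 := h1
      have hmul : 2 * (2:ℝ)^k * ((1 - (1 + Real.sqrt (2 * (ε / a))) ^ 2 / 2) * (a * ‖w‖ ^ 2))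
          ≤ 2 * (2:ℝ)^k * ∑ i ∈ S, ‖(inner ℂ w (u i) : ℂ)‖ ^ 2 := by
        apply mul_le_mul_of_nonneg_left hc (by positivity)
      have heq : 2 * (2:ℝ)^k * ((1 - (1 + Real.sqrt (2 * (ε / a))) ^ 2 / 2) * (a * ‖w‖ ^ 2))
          = 2 * ((1 - (1 + Real.sqrt (2 * (ε / a))) ^ 2 / 2) * (1 - 30 * t)) * ‖w‖ ^ 2 := by
        rw [← hpa]; ring
      rw [heq] at hmul
      calc (1 - 30 * (Real.sqrt 2 * t)) * ‖w‖ ^ 2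
          ≤ 2 * ((1 - (1 + Real.sqrt (2 * (ε / a))) ^ 2 / 2) * (1 - 30 * t)) * ‖w‖ ^ 2 :=
            mul_le_mul_of_nonneg_right key hw0
        _ ≤ 2 * (2:ℝ)^k * ∑ i ∈ S, ‖(inner ℂ w (u i) : ℂ)‖ ^ 2 := hmul
    · have key := key2
      have hc : ∑ i ∈ S, ‖(inner ℂ w (u i) : ℂ)‖ ^ 2 ≤ (1 + Real.sqrt (2 * (ε / a))) ^ 2 / 2 * (b * ‖w‖ ^ 2) := h2
      have hmul : 2 * (2:ℝ)^k * ∑ i ∈ S, ‖(inner ℂ w (u i) : ℂ)‖ ^ 2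
          ≤ 2 * (2:ℝ)^k * ((1 + Real.sqrt (2 * (ε / a))) ^ 2 / 2 * (b * ‖w‖ ^ 2)) := by
        apply mul_le_mul_of_nonneg_left hc (by positivity)
      have heq : 2 * (2:ℝ)^k * ((1 + Real.sqrt (2 * (ε / a))) ^ 2 / 2 * (b * ‖w‖ ^ 2))
          = 2 * ((1 + Real.sqrt (2 * (ε / a))) ^ 2 / 2 * (1 + 30 * t)) * ‖w‖ ^ 2 := by
        rw [← hpb]; ring
      rw [heq] at hmul
      calc 2 * (2:ℝ)^k * ∑ i ∈ S, ‖(inner ℂ w (u i) : ℂ)‖ ^ 2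
          ≤ 2 * ((1 + Real.sqrt (2 * (ε / a))) ^ 2 / 2 * (1 + 30 * t)) * ‖w‖ ^ 2 := hmul
        _ ≤ (1 + 30 * (Real.sqrt 2 * t)) * ‖w‖ ^ 2 :=
            mul_le_mul_of_nonneg_right key hw0

/-- Lemma 2: assuming the MSS partition theorem, there are absolute
constants `c₀, C₀` such that any Parseval frame of equal-norm vectors contains a
sub-family which is a frame with bounds `c₀ n/m` and `C₀ n/m`. -/
theorem stmt6
    (hMSS : ∀ (n m : ℕ) (ε : ℝ), 0 < ε → ∀ u : Fin m → EuclideanSpace ℂ (Fin n),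
      (∀ i, ‖u i‖ ^ 2 ≤ ε) →
      (∀ w : EuclideanSpace ℂ (Fin n), ∑ i, ‖(inner ℂ w (u i) : ℂ)‖ ^ 2 = ‖w‖ ^ 2) →
      ∃ S : Finset (Fin m), ∀ w : EuclideanSpace ℂ (Fin n),
        (∑ i ∈ S, ‖(inner ℂ w (u i) : ℂ)‖ ^ 2 ≤ (1 + Real.sqrt (2 * ε)) ^ 2 / 2 * ‖w‖ ^ 2) ∧
        (∑ i ∈ Sᶜ, ‖(inner ℂ w (u i) : ℂ)‖ ^ 2 ≤ (1 + Real.sqrt (2 * ε)) ^ 2 / 2 * ‖w‖ ^ 2)) :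
    ∃ c₀ C₀ : ℝ, 0 < c₀ ∧ 0 < C₀ ∧
      ∀ (n m : ℕ), 0 < n → n ≤ m → ∀ u : Fin m → EuclideanSpace ℂ (Fin n),
        (∀ i, ‖u i‖ ^ 2 = (n : ℝ) / m) →
        (∀ w : EuclideanSpace ℂ (Fin n), ∑ i, ‖(inner ℂ w (u i) : ℂ)‖ ^ 2 = ‖w‖ ^ 2) →
        ∃ J : Finset (Fin m), ∀ w : EuclideanSpace ℂ (Fin n),
          c₀ * ((n : ℝ) / m) * ‖w‖ ^ 2 ≤ ∑ i ∈ J, ‖(inner ℂ w (u i) : ℂ)‖ ^ 2 ∧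
          ∑ i ∈ J, ‖(inner ℂ w (u i) : ℂ)‖ ^ 2 ≤ C₀ * ((n : ℝ) / m) * ‖w‖ ^ 2 := by
  refine ⟨1 / 10000, 100000, by norm_num, by norm_num, ?_⟩
  intro n m hn hnm u hnorm hpar
  have hm : 0 < m := lt_of_lt_of_le hn hnm
  set ε : ℝ := (n : ℝ) / m with hεdef
  have hε : 0 < ε := by
    apply div_pos
    · exact_mod_cast hn
    · exact_mod_cast hm
  have hε1 : ε ≤ 1 := by
    rw [hεdef]
    rw [div_le_one (by exact_mod_cast hm)]
    exact_mod_cast hnm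
  have hnorm' : ∀ i, ‖u i‖ ^ 2 ≤ ε := fun i => le_of_eq (hnorm i)
  by_cases hcase : ε ≤ 1 / 10000
  · -- iterate
    have hex : ∃ k : ℕ, 1 / 10000 < (2 : ℝ) ^ k * ε := by
      obtain ⟨N, hN⟩ := pow_unbounded_of_one_lt ((1 / 10000) / ε) (by norm_num : (1:ℝ) < 2)
      exact ⟨N, by rw [div_lt_iff₀ hε] at hN; linarith⟩
    classical
    set k0 := Nat.find hex with hk0def
    have hk0 : 1 / 10000 < (2 : ℝ) ^ k0 * ε := Nat.find_spec hex
    have hk0ne : k0 ≠ 0 := by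
      intro h
      rw [h] at hk0
      simp at hk0
      linarith
    set k := k0 - 1 with hkdef
    have hkk : k + 1 = k0 := Nat.succ_pred_eq_of_pos (Nat.pos_of_ne_zero hk0ne)
    have hk1 : (2 : ℝ) ^ k * ε ≤ 1 / 10000 := by
      by_contra hcon
      push_neg at hcon
      exact absurd hcon (Nat.find_min hex (by omega))
    have hk2 : 1 / 10000 < (2 : ℝ) ^ (k + 1) * ε := by rw [hkk]; exact hk0
    obtain ⟨J, hJ⟩ := iter_lemma hMSS k n m u ε hε hk1 hnorm' hpar
    refine ⟨J, fun w => ?_⟩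
    obtain ⟨hJl, hJu⟩ := hJ w
    have hp : (0 : ℝ) < (2 : ℝ) ^ k := by positivity
    have hw0 : (0 : ℝ) ≤ ‖w‖ ^ 2 := by positivity
    set t := Real.sqrt ((2 : ℝ) ^ k * ε) with htdef
    have ht0 : 0 ≤ t := Real.sqrt_nonneg _
    have ht2 : t ^ 2 = (2 : ℝ) ^ k * ε := Real.sq_sqrt (by positivity)
    have ht100 : t ≤ 1 / 100 := by nlinarith
    have h2k : (2 : ℝ) ^ (k + 1) * ε = 2 * ((2 : ℝ) ^ k * ε) := by ring
    have hk2' : 1 / 20000 < (2 : ℝ) ^ k * ε := by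
      rw [h2k] at hk2
      linarith
    constructor
    · apply le_of_mul_le_mul_left _ hp
      calc (2 : ℝ) ^ k * (1 / 10000 * ε * ‖w‖ ^ 2)
          = (1 / 10000 * ((2 : ℝ) ^ k * ε)) * ‖w‖ ^ 2 := by ring
        _ ≤ (1 - 30 * t) * ‖w‖ ^ 2 := by
            apply mul_le_mul_of_nonneg_right _ hw0
            nlinarith
        _ ≤ (2 : ℝ) ^ k * ∑ i ∈ J, ‖(inner ℂ w (u i) : ℂ)‖ ^ 2 := hJl
    · apply le_of_mul_le_mul_left _ hp
      calc (2 : ℝ) ^ k * ∑ i ∈ J, ‖(inner ℂ w (u i) : ℂ)‖ ^ 2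
          ≤ (1 + 30 * t) * ‖w‖ ^ 2 := hJu
        _ ≤ (100000 * ((2 : ℝ) ^ k * ε)) * ‖w‖ ^ 2 := by
            apply mul_le_mul_of_nonneg_right _ hw0
            nlinarith
        _ = (2 : ℝ) ^ k * (100000 * ε * ‖w‖ ^ 2) := by ring
  · -- trivial case: take all vectors
    push_neg at hcase
    refine ⟨Finset.univ, fun w => ?_⟩
    rw [hpar w]
    have hw0 : (0 : ℝ) ≤ ‖w‖ ^ 2 := by positivity
    constructor
    · nlinarith
    · nlinarith
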